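/- arXiv:2511.03335 — 4 statements merged into one kernel-verified Lean document; each statement's English description precedes it below -/
import Mathlib

section
/- For all positive integers k and c there exists an integer n such that the chromatic number of the shift graph S_{k,n} is greater than c. -/
open SimpleGraph

namespace SignedGS

variable {V : Type*}

/-- The sign of a walk in a signed graph: the product of the signs of its edges. -/
def walkSign {G : SimpleGraph V} (σ : Sym2 V → ℤˣ) {u v : V} (w : G.Walk u v) : ℤˣ :=
  (w.edges.map σ).prod

/-- `X` is a balanced set of `(G, σ)`: every cycle of the subgraph induced on `X`
is positive. -/
def IsBalancedSet (G : SimpleGraph V) (σ : Sym2 V → ℤˣ) (X : Set V) : Prop :=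
  ∀ ⦃v : V⦄ (w : G.Walk v v), w.IsCycle → (∀ u ∈ w.support, u ∈ X) → walkSign σ w = 1

/-- `(G, σ)` can be covered by `n` balanced sets. -/
def BalancedColorable (G : SimpleGraph V) (σ : Sym2 V → ℤˣ) (n : ℕ) : Prop :=
  ∃ f : V → Fin n, ∀ i : Fin n, IsBalancedSet G σ {v | f v = i}

/-- The balanced chromatic number of `(G, σ)`. -/
noncomputable def balancedChromNum (G : SimpleGraph V) (σ : Sym2 V → ℤˣ) : ℕ :=
  sInf {n | BalancedColorable G σ n}

/-- The set `X ⊆ V` can be covered by `n` sets each of which is balanced in `(G, σ)`. -/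
def BalancedColorableOn (G : SimpleGraph V) (σ : Sym2 V → ℤˣ) (X : Set V) (n : ℕ) : Prop :=
  ∃ f : V → Fin n, ∀ i : Fin n, IsBalancedSet G σ {v | v ∈ X ∧ f v = i}

/-- The balanced chromatic number of the signed subgraph of `(G, σ)` induced on `X`. -/
noncomputable def balancedChromNumOn (G : SimpleGraph V) (σ : Sym2 V → ℤˣ) (X : Set V) : ℕ :=
  sInf {n | BalancedColorableOn G σ X n}

/-- `(G, σ)⁻` : the spanning subgraph of `G` consisting of the negative edges. -/
def negSubgraph (G : SimpleGraph V) (σ : Sym2 V → ℤˣ) : SimpleGraph V where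
  Adj u v := G.Adj u v ∧ σ s(u, v) = -1
  symm := by
    constructor
    intro u v h
    refine ⟨h.1.symm, ?_⟩
    rw [Sym2.eq_swap]
    exact h.2
  loopless := by constructor; intro v h; exact G.irrefl h.1

/-- Two signatures on `G` are switching equivalent. -/
def SwitchEquiv (G : SimpleGraph V) (σ σ' : Sym2 V → ℤˣ) : Prop :=
  ∃ η : V → ℤˣ, ∀ u v : V, G.Adj u v → σ' s(u, v) = η u * σ s(u, v) * η v

/-- Every triangle of `(G, σ)` is positive. -/
def AllTrianglesPositive (G : SimpleGraph V) (σ : Sym2 V → ℤˣ) : Prop :=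
  ∀ u v w : V, G.Adj u v → G.Adj v w → G.Adj u w →
    σ s(u, v) * σ s(v, w) * σ s(u, w) = 1

/-- `G` contains an induced copy of `F`. -/
def HasInducedCopy {W : Type*} (F : SimpleGraph W) (G : SimpleGraph V) : Prop :=
  ∃ f : W ↪ V, ∀ a b : W, G.Adj (f a) (f b) ↔ F.Adj a b

/-- The star `K_{1,m}` with center `0` and `m` leaves. -/
def starGraph (m : ℕ) : SimpleGraph (Fin (m + 1)) where
  Adj a b := (a = 0 ∨ b = 0) ∧ a ≠ b
  symm := by constructor; rintro a b ⟨h1, h2⟩; exact ⟨h1.symm, h2.symm⟩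
  loopless := by constructor; rintro a ⟨_, h⟩; exact h rfl

private def disjUnionAdj {W1 W2 : Type*} (F1 : SimpleGraph W1) (F2 : SimpleGraph W2) :
    W1 ⊕ W2 → W1 ⊕ W2 → Prop
  | .inl x, .inl y => F1.Adj x y
  | .inr x, .inr y => F2.Adj x y
  | _, _ => False

/-- The disjoint union `F1 + F2` of two graphs. -/
def disjUnion {W1 W2 : Type*} (F1 : SimpleGraph W1) (F2 : SimpleGraph W2) :
    SimpleGraph (W1 ⊕ W2) where
  Adj := disjUnionAdj F1 F2
  symm := by
    constructor
    rintro (x | x) (y | y) h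
    · exact F1.adj_symm h
    · exact h.elim
    · exact h.elim
    · exact F2.adj_symm h
  loopless := by
    constructor
    rintro (x | x) h
    · exact F1.irrefl h
    · exact F2.irrefl h

private def fullJoinAdj {W1 W2 : Type*} (G1 : SimpleGraph W1) (G2 : SimpleGraph W2) :
    W1 ⊕ W2 → W1 ⊕ W2 → Prop
  | .inl x, .inl y => G1.Adj x y
  | .inr x, .inr y => G2.Adj x y
  | _, _ => True

/-- The full join `G1 ⋈ G2` of two vertex-disjoint graphs. -/
def fullJoin {W1 W2 : Type*} (G1 : SimpleGraph W1) (G2 : SimpleGraph W2) :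
    SimpleGraph (W1 ⊕ W2) where
  Adj := fullJoinAdj G1 G2
  symm := by
    constructor
    rintro (x | x) (y | y) h
    · exact G1.adj_symm h
    · trivial
    · trivial
    · exact G2.adj_symm h
  loopless := by
    constructor
    rintro (x | x) h
    · exact G1.irrefl h
    · exact G2.irrefl h

/-- The linear forest with `l` components, the `i`-th component being a path
on `m i` vertices. -/
def linearForest (l : ℕ) (m : Fin l → ℕ) : SimpleGraph (Σ i : Fin l, Fin (m i)) where
  Adj a b := a.1 = b.1 ∧ ((a.2 : ℕ) + 1 = (b.2 : ℕ) ∨ (b.2 : ℕ) + 1 = (a.2 : ℕ))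
  symm := by constructor; rintro a b ⟨h1, h2⟩; exact ⟨h1.symm, h2.symm⟩
  loopless := by constructor; rintro a ⟨_, h⟩; omega

/-- `(G, σ)` has an induced subgraph switching equivalent to the all-negative `K_4`. -/
def HasSwitchK4Neg (G : SimpleGraph V) (σ : Sym2 V → ℤˣ) : Prop :=
  ∃ f : Fin 4 ↪ V, (∀ a b : Fin 4, a ≠ b → G.Adj (f a) (f b)) ∧
    ∃ η : Fin 4 → ℤˣ, ∀ a b : Fin 4, a ≠ b → η a * σ s(f a, f b) * η b = -1

/-- `(G, σ)` has a triangle all of whose edges are negative. -/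
def HasNegTriangle (G : SimpleGraph V) (σ : Sym2 V → ℤˣ) : Prop :=
  ∃ u v w : V, G.Adj u v ∧ G.Adj v w ∧ G.Adj u w ∧
    σ s(u, v) = -1 ∧ σ s(v, w) = -1 ∧ σ s(u, w) = -1

/-- `(G, σ)` has four vertices inducing a copy of `(K_4, M)`: a complete graph on four
vertices whose negative edges form a perfect matching. -/
def HasK4M (G : SimpleGraph V) (σ : Sym2 V → ℤˣ) : Prop :=
  ∃ a b c d : V, a ≠ b ∧ a ≠ c ∧ a ≠ d ∧ b ≠ c ∧ b ≠ d ∧ c ≠ d ∧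
    G.Adj a b ∧ G.Adj a c ∧ G.Adj a d ∧ G.Adj b c ∧ G.Adj b d ∧ G.Adj c d ∧
    σ s(a, b) = -1 ∧ σ s(c, d) = -1 ∧
    σ s(a, c) = 1 ∧ σ s(a, d) = 1 ∧ σ s(b, c) = 1 ∧ σ s(b, d) = 1

/-- The vertices of the shift graph `S_{k,n}`: strictly increasing `k`-sequences
with values in `{1, …, n}`. -/
def ShiftVertex (k n : ℕ) : Type :=
  {s : Fin k → ℕ // StrictMono s ∧ ∀ i, s i ∈ Finset.Icc 1 n}

/-- `b` is obtained from `a` by shifting: `b = (a_2, …, a_k, t)` for some `t`. -/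
def ShiftFollows {k n : ℕ} (a b : ShiftVertex k n) : Prop :=
  ∀ (i : ℕ) (h : i + 1 < k), b.1 ⟨i, Nat.lt_of_succ_lt h⟩ = a.1 ⟨i + 1, h⟩

/-- The shift graph `S_{k,n}`. -/
def shiftGraph (k n : ℕ) : SimpleGraph (ShiftVertex k n) where
  Adj a b := a ≠ b ∧ (ShiftFollows a b ∨ ShiftFollows b a)
  symm := by constructor; rintro a b ⟨h1, h2⟩; exact ⟨h1.symm, h2.symm⟩
  loopless := by constructor; rintro a ⟨h, _⟩; exact h rfl


private lemma base_not_colorable (c : ℕ) : ¬ (shiftGraph 1 (c + 1)).Colorable c := by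
  rintro ⟨C⟩
  have hmono : ∀ f : Fin 1 → ℕ, StrictMono f := by
    intro f i j h
    have hi := i.isLt; have hj := j.isLt
    have := Fin.lt_iff_val_lt_val.mp h
    omega
  let e : Fin (c + 1) → ShiftVertex 1 (c + 1) :=
    fun i => ⟨fun _ => (i : ℕ) + 1, hmono _, fun _ => Finset.mem_Icc.mpr
      ⟨by show 1 ≤ (i : ℕ) + 1; omega, by show (i : ℕ) + 1 ≤ c + 1; have := i.isLt; omega⟩⟩
  obtain ⟨i, j, hij, hfij⟩ := Fintype.exists_ne_map_eq_of_card_lt (fun i => C (e i))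
    (by simp)
  have hne : e i ≠ e j := by
    intro h
    apply hij
    have : (i : ℕ) + 1 = (j : ℕ) + 1 := congrFun (congrArg Subtype.val h) 0
    exact Fin.ext (by omega)
  have hadj : (shiftGraph 1 (c + 1)).Adj (e i) (e j) :=
    ⟨hne, Or.inl fun i' h' => absurd h' (by omega)⟩
  exact C.valid hadj hfij

open scoped Classical in
/-- The set of colors appearing on extensions of `s`. -/
private noncomputable def extColor {k n c : ℕ} (C : (shiftGraph (k + 1) n).Coloring (Fin c))
    (s : ShiftVertex k n) : Finset (Fin c) :=
  Finset.univ.filter (fun x => ∃ b : ShiftVertex (k + 1) n,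
    (∀ i : Fin k, b.1 ⟨i, Nat.lt_succ_of_lt i.isLt⟩ = s.1 i) ∧ C b = x)

private lemma mem_extColor {k n c : ℕ} (C : (shiftGraph (k + 1) n).Coloring (Fin c))
    (s : ShiftVertex k n) (x : Fin c) :
    x ∈ extColor C s ↔ ∃ b : ShiftVertex (k + 1) n,
      (∀ i : Fin k, b.1 ⟨i, Nat.lt_succ_of_lt i.isLt⟩ = s.1 i) ∧ C b = x := by
  classical
  simp [extColor]

private lemma snoc_lt {k : ℕ} (f : Fin k → ℕ) (x : ℕ) (i : ℕ) (h : i < k) :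
    (Fin.snoc f x : Fin (k + 1) → ℕ) ⟨i, Nat.lt_succ_of_lt h⟩ = f ⟨i, h⟩ := by
  simp [Fin.snoc, h]

private lemma snoc_top {k : ℕ} (f : Fin k → ℕ) (x : ℕ) :
    (Fin.snoc f x : Fin (k + 1) → ℕ) ⟨k, Nat.lt_succ_self k⟩ = x := by
  simp [Fin.snoc]

private lemma step_main {k n c : ℕ} (hk : 1 ≤ k) (C : (shiftGraph (k + 1) n).Coloring (Fin c))
    (u v : ShiftVertex k n) (hf : ShiftFollows u v)
    (hlt : u.1 ⟨k - 1, by omega⟩ < v.1 ⟨k - 1, by omega⟩) :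
    extColor C u ≠ extColor C v := by
  intro hg
  have hkk : k - 1 < k := by omega
  set w : ℕ := v.1 ⟨k - 1, hkk⟩ with hw
  -- the extension `a = (u_1, ..., u_k, v_k)`
  have haMono : StrictMono (Fin.snoc u.1 w : Fin (k + 1) → ℕ) := by
    intro i j hij
    have hij' : (i : ℕ) < (j : ℕ) := hij
    have hj := j.isLt
    by_cases hjk : (j : ℕ) < k
    · have hik : (i : ℕ) < k := by omega
      have h1 : (Fin.snoc u.1 w : Fin (k + 1) → ℕ) i = u.1 ⟨i, hik⟩ :=
        snoc_lt u.1 w i hik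
      have h2 : (Fin.snoc u.1 w : Fin (k + 1) → ℕ) j = u.1 ⟨j, hjk⟩ :=
        snoc_lt u.1 w j hjk
      rw [h1, h2]
      exact u.2.1 (Fin.mk_lt_mk.mpr hij')
    · have hjeq : (j : ℕ) = k := by omega
      have hik : (i : ℕ) < k := by omega
      have h1 : (Fin.snoc u.1 w : Fin (k + 1) → ℕ) i = u.1 ⟨i, hik⟩ :=
        snoc_lt u.1 w i hik
      have h2 : (Fin.snoc u.1 w : Fin (k + 1) → ℕ) j = w := by
        have hje : j = (⟨k, Nat.lt_succ_self k⟩ : Fin (k + 1)) := Fin.ext hjeq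
        rw [hje]
        exact snoc_top u.1 w
      rw [h1, h2]
      calc u.1 ⟨i, hik⟩ ≤ u.1 ⟨k - 1, hkk⟩ := u.2.1.monotone (Fin.mk_le_mk.mpr (by omega))
        _ < w := hlt
  have haMem : ∀ i, (Fin.snoc u.1 w : Fin (k + 1) → ℕ) i ∈ Finset.Icc 1 n := by
    intro i
    by_cases hik : (i : ℕ) < k
    · have h1 : (Fin.snoc u.1 w : Fin (k + 1) → ℕ) i = u.1 ⟨i, hik⟩ :=
        snoc_lt u.1 w i hik
      rw [h1]; exact u.2.2 _
    · have hie : i = (⟨k, Nat.lt_succ_self k⟩ : Fin (k + 1)) :=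
        Fin.ext (show (i : ℕ) = k by have := i.isLt; omega)
      rw [hie, snoc_top]
      exact v.2.2 _
  set a : ShiftVertex (k + 1) n := ⟨Fin.snoc u.1 w, haMono, haMem⟩ with ha
  have ha1 : ∀ (i : ℕ) (h : i < k), a.1 ⟨i, Nat.lt_succ_of_lt h⟩ = u.1 ⟨i, h⟩ :=
    fun i h => snoc_lt u.1 w i h
  have ha2 : a.1 ⟨k, Nat.lt_succ_self k⟩ = w := snoc_top u.1 w
  have hCa : C a ∈ extColor C u :=
    (mem_extColor C u (C a)).mpr ⟨a, fun i => ha1 i i.isLt, rfl⟩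
  rw [hg] at hCa
  obtain ⟨b, hbext, hCb⟩ := (mem_extColor C v (C a)).mp hCa
  have hb1 : ∀ (i : ℕ) (h : i < k), b.1 ⟨i, Nat.lt_succ_of_lt h⟩ = v.1 ⟨i, h⟩ :=
    fun i h => hbext ⟨i, h⟩
  have hne : a ≠ b := by
    intro he
    have h1 : a.1 ⟨k - 1, Nat.lt_succ_of_lt hkk⟩ = b.1 ⟨k - 1, Nat.lt_succ_of_lt hkk⟩ := by
      rw [he]
    rw [ha1 (k - 1) hkk, hb1 (k - 1) hkk] at h1
    exact absurd h1 (Nat.ne_of_lt hlt)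
  have hsf : ShiftFollows a b := by
    intro i hi
    have hik : i < k := by omega
    have hbv : b.1 ⟨i, Nat.lt_of_succ_lt hi⟩ = v.1 ⟨i, hik⟩ := hb1 i hik
    rw [hbv]
    by_cases hik1 : i + 1 < k
    · have hav : a.1 ⟨i + 1, hi⟩ = u.1 ⟨i + 1, hik1⟩ := ha1 (i + 1) hik1
      rw [hav]
      exact hf i hik1
    · have hieq : i = k - 1 := by omega
      have h1 : (⟨i + 1, hi⟩ : Fin (k + 1)) = ⟨k, Nat.lt_succ_self k⟩ := Fin.ext (by simp; omega)
      rw [h1, ha2, hw]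
      subst hieq
      rfl
  have hadj : (shiftGraph (k + 1) n).Adj a b := ⟨hne, Or.inl hsf⟩
  exact C.valid hadj hCb.symm

private lemma step_colorable {k n c : ℕ} (hk : 1 ≤ k)
    (h : (shiftGraph (k + 1) n).Colorable c) : (shiftGraph k n).Colorable (2 ^ c) := by
  classical
  obtain ⟨C⟩ := h
  have key : ∀ s s' : ShiftVertex k n, (shiftGraph k n).Adj s s' →
      extColor C s ≠ extColor C s' := by
    intro s s' hadj
    obtain ⟨hne, hor⟩ := hadj
    have hkk : k - 1 < k := by omega
    rcases hor with hsf | hsf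
    · by_cases hk2 : 2 ≤ k
      · refine step_main hk C s s' hsf ?_
        have h1 : s'.1 ⟨k - 2, by omega⟩ = s.1 ⟨k - 2 + 1, by omega⟩ := hsf (k - 2) (by omega)
        have h2 : s'.1 ⟨k - 2, by omega⟩ < s'.1 ⟨k - 1, by omega⟩ :=
          s'.2.1 (Fin.mk_lt_mk.mpr (by omega))
        have h3 : (⟨k - 2 + 1, by omega⟩ : Fin k) = ⟨k - 1, by omega⟩ := Fin.ext (by simp; omega)
        rw [h3] at h1
        omega
      · -- k = 1 : any direction of ShiftFollows holds trivially
        have hk1 : k = 1 := by omega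
        have htr : ∀ x y : ShiftVertex k n, ShiftFollows x y :=
          fun x y i hi => absurd hi (by omega)
        have hvne : s.1 ⟨k - 1, hkk⟩ ≠ s'.1 ⟨k - 1, hkk⟩ := by
          intro h
          apply hne
          apply Subtype.ext
          funext i
          have : i = ⟨k - 1, hkk⟩ := Fin.ext (by have := i.isLt; omega)
          rw [this]; exact h
        rcases lt_or_gt_of_ne hvne with hlt | hlt
        · exact step_main hk C s s' (htr s s') hlt
        · exact fun h => step_main hk C s' s (htr s' s) hlt h.symm
    · by_cases hk2 : 2 ≤ k
      · refine fun h => step_main hk C s' s hsf ?_ h.symm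
        have h1 : s.1 ⟨k - 2, by omega⟩ = s'.1 ⟨k - 2 + 1, by omega⟩ := hsf (k - 2) (by omega)
        have h2 : s.1 ⟨k - 2, by omega⟩ < s.1 ⟨k - 1, by omega⟩ :=
          s.2.1 (Fin.mk_lt_mk.mpr (by omega))
        have h3 : (⟨k - 2 + 1, by omega⟩ : Fin k) = ⟨k - 1, by omega⟩ := Fin.ext (by simp; omega)
        rw [h3] at h1
        omega
      · have hk1 : k = 1 := by omega
        have htr : ∀ x y : ShiftVertex k n, ShiftFollows x y :=
          fun x y i hi => absurd hi (by omega)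
        have hvne : s.1 ⟨k - 1, hkk⟩ ≠ s'.1 ⟨k - 1, hkk⟩ := by
          intro h
          apply hne
          apply Subtype.ext
          funext i
          have : i = ⟨k - 1, hkk⟩ := Fin.ext (by have := i.isLt; omega)
          rw [this]; exact h
        rcases lt_or_gt_of_ne hvne with hlt | hlt
        · exact step_main hk C s s' (htr s s') hlt
        · exact fun h => step_main hk C s' s (htr s' s) hlt h.symm
  have hcol := (SimpleGraph.Coloring.mk (extColor C) (fun h => key _ _ h)).colorable
  simpa [Fintype.card_finset] using hcol

/-- shift graphs have unbounded chromatic number. -/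
theorem stmt6 (k c : ℕ) (hk : 0 < k) (hc : 0 < c) :
    ∃ n : ℕ, (c : ℕ∞) < (shiftGraph k n).chromaticNumber := by
  have H : ∀ k : ℕ, 1 ≤ k → ∀ c : ℕ, ∃ n : ℕ, ¬ (shiftGraph k n).Colorable c := by
    intro k
    induction k with
    | zero => intro h; omega
    | succ k ih =>
      intro _ c
      by_cases hk1 : 1 ≤ k
      · obtain ⟨n, hn⟩ := ih hk1 (2 ^ c)
        exact ⟨n, fun hcol => hn (step_colorable hk1 hcol)⟩
      · have hk0 : k = 0 := by omega
        subst hk0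
        exact ⟨c + 1, base_not_colorable c⟩
  obtain ⟨n, hn⟩ := H k hk c
  refine ⟨n, ?_⟩
  rw [← not_le, SimpleGraph.chromaticNumber_le_iff_colorable]
  exact hn

end SignedGS
end

section
/- For every positive integer c there exists a signed graph (G, σ) such that: (i) every triangle of (G, σ) has positive sign (equivalently, no induced subgraph of (G, σ) is switching equivalent to the all-negative triangle (K_3, −)); (ii) the underlying graph G contains no induced copy of the claw K_{1,3}; and (iii) χ_b(G, σ) > c. -/
open SimpleGraph

namespace SignedGS

variable {V : Type*}

section WalkSignLemmas

variable {G : SimpleGraph V} {σ : Sym2 V → ℤˣ}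

lemma walkSign_nil {v : V} : walkSign σ (Walk.nil : G.Walk v v) = 1 := rfl

lemma walkSign_cons {u v w : V} (h : G.Adj u v) (p : G.Walk v w) :
    walkSign σ (Walk.cons h p) = σ s(u, v) * walkSign σ p := by
  simp [walkSign]

lemma walkSign_append {u v w : V} (p : G.Walk u v) (q : G.Walk v w) :
    walkSign σ (p.append q) = walkSign σ p * walkSign σ q := by
  simp [walkSign]

lemma walkSign_reverse {u v : V} (p : G.Walk u v) :
    walkSign σ p.reverse = walkSign σ p := by
  simp [walkSign, List.prod_reverse]

lemma walkSign_eq_of_perm {u v u' v' : V} {p : G.Walk u v} {q : G.Walk u' v'}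
    (h : p.edges.Perm q.edges) : walkSign σ p = walkSign σ q :=
  List.Perm.prod_eq (h.map σ)

lemma units_ne_iff {a b : ℤˣ} (h : a ≠ b) : a = -b := by
  rcases Int.units_eq_one_or a with rfl | rfl <;> rcases Int.units_eq_one_or b with rfl | rfl <;>
    simp_all

/-- In a path from u to v, if the edge s(v,u) occurs, the path has length 1. -/
lemma length_eq_one_of_edge_back {u v : V} (p : G.Walk u v) (hp : p.IsPath)
    (he : s(v, u) ∈ p.edges) : p.length = 1 := by
  induction p with
  | nil => simp at he
  | @cons a y w h q ih =>
    rw [Walk.edges_cons, List.mem_cons] at he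
    rcases he with he | he
    · have hy : y = w := by
        rcases Sym2.eq_iff.mp he with ⟨h1, h2⟩ | ⟨h1, h2⟩
        · exact h2.symm.trans h1.symm
        · exact h1.symm
      subst hy
      have : q = Walk.nil := (Walk.isPath_iff_eq_nil (p := q)).mp ((Walk.cons_isPath_iff h q).mp hp).1
      simp [this]
    · exfalso
      have : a ∈ q.support := Walk.snd_mem_support_of_mem_edges q he
      exact ((Walk.cons_isPath_iff h q).mp hp).2 this

lemma exists_negCycle {G : SimpleGraph V} {σ : Sym2 V → ℤˣ} {X : Set V} :
    ∀ (L : ℕ) {v : V} (w : G.Walk v v), w.length ≤ L →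
      (∀ x ∈ w.support, x ∈ X) → walkSign σ w = -1 →
      ∃ (v' : V) (c : G.Walk v' v'), c.IsCycle ∧ (∀ x ∈ c.support, x ∈ X) ∧
        walkSign σ c = -1 := by
  intro L
  induction L using Nat.strong_induction_on with
  | _ L IH =>
  intro v w hlen hsup hsign
  by_cases hnd : w.support.tail.Nodup
  · -- w is a cycle (or degenerate)
    cases w with
    | nil => simp [walkSign_nil] at hsign
    | @cons _ u _ h p =>
      have hpath : p.IsPath := by
        rw [Walk.isPath_def]
        simpa using hnd
      by_cases he : s(v, u) ∈ p.edges
      · -- p has length 1, total sign is a square = 1, contradiction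
        exfalso
        have hl1 := length_eq_one_of_edge_back p hpath he
        have hedges : p.edges = [s(v, u)] := by
          have hlen1 : p.edges.length = 1 := by rw [Walk.length_edges]; exact hl1
          obtain ⟨a, ha⟩ := List.length_eq_one_iff.mp hlen1
          rw [ha] at he ⊢
          simp at he
          rw [he]
        have hsq : walkSign σ (Walk.cons h p) = σ s(v, u) * σ s(v, u) := by
          rw [walkSign_cons]
          rw [show walkSign σ p = σ s(v, u) from by simp [walkSign, hedges]]
        rw [hsign, Int.units_mul_self] at hsq
        exact absurd hsq (by decide)
      · exact ⟨v, Walk.cons h p, (Walk.cons_isCycle_iff p h).mpr ⟨hpath, he⟩, hsup, hsign⟩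
  · -- duplicate vertex: split into two shorter closed walks
    classical
    obtain ⟨x, hdup⟩ := List.exists_duplicate_iff_not_nodup.mpr hnd
    have hcount : 2 ≤ w.support.tail.count x := List.duplicate_iff_two_le_count.mp hdup
    have hxsup : x ∈ w.support := List.mem_of_mem_tail hdup.mem
    have hwlen : 1 ≤ w.length := by
      have := w.length_support
      have h2 : 2 ≤ w.support.tail.length := le_trans hcount List.count_le_length
      have h3 : w.support.tail.length + 1 = w.support.length := by
        rw [Walk.support_eq_cons w]; simp
      omega
    have hpack : ∃ r : G.Walk x x, walkSign σ r = -1 ∧ (∀ y ∈ r.support, y ∈ X) ∧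
        r.length = w.length ∧ 2 ≤ r.support.tail.count x := by
      refine ⟨w.rotate x hxsup, ?_, ?_, ?_, ?_⟩
      · exact (walkSign_eq_of_perm (w.rotate_edges x hxsup).perm).trans hsign
      · intro y hy
        rw [Walk.support_eq_cons, List.mem_cons] at hy
        rcases hy with rfl | hy
        · exact hsup _ hxsup
        · exact hsup _ (List.mem_of_mem_tail (((w.support_rotate x hxsup).perm.mem_iff).mp hy))
      · have := (w.rotate_edges x hxsup).perm.length_eq
        simpa [Walk.length_edges] using this
      · rw [(w.support_rotate x hxsup).perm.count_eq]; exact hcount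
    obtain ⟨r, hrsign, hrsup, hrlen, hrcount⟩ := hpack
    cases r with
    | nil => simp [walkSign_nil] at hrsign
    | @cons _ u _ h p =>
      have hcount2 : 2 ≤ p.support.count x := by simpa using hrcount
      have hxp : x ∈ p.support := by
        have : 0 < p.support.count x := by omega
        exact List.count_pos_iff.mp this
      have hspec : (p.takeUntil x hxp).append (p.dropUntil x hxp) = p := p.take_spec hxp
      have hdne : (p.dropUntil x hxp).length ≠ 0 := by
        intro h0
        have hdnil : (p.dropUntil x hxp).support.tail = [] := by
          have hls := (p.dropUntil x hxp).length_support
          rw [Walk.support_eq_cons] at hls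
          simp only [List.length_cons, h0] at hls
          exact List.eq_nil_of_length_eq_zero (by omega)
        have hps : p.support = (p.takeUntil x hxp).support := by
          conv_lhs => rw [← hspec]
          rw [Walk.support_append, hdnil, List.append_nil]
        rw [hps] at hcount2
        have := p.count_support_takeUntil_eq_one hxp
        omega
      have hsplit : walkSign σ (Walk.cons h (p.takeUntil x hxp)) *
          walkSign σ (p.dropUntil x hxp) = -1 := by
        rw [walkSign_cons, mul_assoc, ← walkSign_append, hspec, ← walkSign_cons h, hrsign]
      have hlensum : (p.takeUntil x hxp).length + (p.dropUntil x hxp).length + 1 = w.length := by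
        have h1 : (p.takeUntil x hxp).length + (p.dropUntil x hxp).length = p.length := by
          conv_rhs => rw [← hspec]
          rw [Walk.length_append]
        have h2 : p.length + 1 = w.length := by rw [← hrlen]; simp
        omega
      have htsup : ∀ y ∈ (Walk.cons h (p.takeUntil x hxp)).support, y ∈ X := by
        intro y hy
        rw [Walk.support_cons, List.mem_cons] at hy
        rcases hy with rfl | hy
        · exact hrsup _ ((Walk.cons h p).start_mem_support)
        · exact hrsup _ (by
            rw [Walk.support_cons]
            exact List.mem_cons_of_mem _ (Walk.support_takeUntil_subset p hxp hy))
      have hdsup : ∀ y ∈ (p.dropUntil x hxp).support, y ∈ X := by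
        intro y hy
        exact hrsup _ (by
          rw [Walk.support_cons]
          exact List.mem_cons_of_mem _ (Walk.support_dropUntil_subset p hxp hy))
      rcases Int.units_eq_one_or (walkSign σ (Walk.cons h (p.takeUntil x hxp))) with h1 | h1
      · have h2 : walkSign σ (p.dropUntil x hxp) = -1 := by
          rw [h1, one_mul] at hsplit; exact hsplit
        exact IH (p.dropUntil x hxp).length (by omega) _ le_rfl hdsup h2
      · refine IH (Walk.cons h (p.takeUntil x hxp)).length ?_ _ le_rfl htsup h1
        rw [Walk.length_cons]
        omega

end WalkSignLemmas
section Potential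

variable {α : Type*} (G : SimpleGraph V) (σ : Sym2 V → ℤˣ) (f : V → α)

/-- Subgraph of edges within a color class. -/
def classGraph : SimpleGraph V where
  Adj u v := G.Adj u v ∧ f u = f v
  symm := ⟨fun u v h => ⟨h.1.symm, h.2.symm⟩⟩
  loopless := ⟨fun u h => G.irrefl h.1⟩

/-- Auxiliary double cover graph. -/
def auxGraph : SimpleGraph (V × ℤˣ) where
  Adj p q := G.Adj p.1 q.1 ∧ f p.1 = f q.1 ∧ q.2 = p.2 * σ s(p.1, q.1)
  symm := by
    constructor
    rintro ⟨u, s⟩ ⟨v, t⟩ ⟨h1, h2, h3⟩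
    refine ⟨h1.symm, h2.symm, ?_⟩
    simp only at h3 ⊢
    rw [h3, Sym2.eq_swap, mul_assoc, Int.units_mul_self, mul_one]
  loopless := ⟨fun p h => G.irrefl h.1⟩

variable {G σ f}

lemma aux_proj : ∀ {a b : V × ℤˣ} (w : (auxGraph G σ f).Walk a b),
    ∃ p : G.Walk a.1 b.1, (∀ x ∈ p.support, f x = f a.1) ∧ b.2 = a.2 * walkSign σ p := by
  intro a b w
  induction w with
  | nil =>
    exact ⟨Walk.nil, by simp, by simp [walkSign]⟩
  | @cons a m b h w ih =>
    obtain ⟨h1, h2, h3⟩ := h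
    obtain ⟨p, hp1, hp2⟩ := ih
    refine ⟨Walk.cons h1 p, ?_, ?_⟩
    · intro x hx
      rw [Walk.support_cons, List.mem_cons] at hx
      rcases hx with rfl | hx
      · rfl
      · exact (hp1 x hx).trans h2.symm
    · rw [walkSign_cons, hp2, h3, mul_assoc]

lemma aux_lift : ∀ {x y : V} (w : (classGraph G f).Walk x y) (s : ℤˣ),
    ∃ t, (auxGraph G σ f).Reachable (x, s) (y, t) := by
  intro x y w
  induction w with
  | nil => exact fun s => ⟨s, Reachable.refl _⟩
  | @cons x m y h w ih =>
    intro s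
    obtain ⟨t, ht⟩ := ih (s * σ s(x, m))
    have hadj : (auxGraph G σ f).Adj (x, s) (m, s * σ s(x, m)) := ⟨h.1, h.2, rfl⟩
    exact ⟨t, hadj.reachable.trans ht⟩

lemma aux_unique {a : V × ℤˣ} {v : V} {t t' : ℤˣ}
    (hb : IsBalancedSet G σ {x | f x = f a.1})
    (h1 : (auxGraph G σ f).Reachable a (v, t)) (h2 : (auxGraph G σ f).Reachable a (v, t')) :
    t = t' := by
  obtain ⟨w1⟩ := h1
  obtain ⟨w2⟩ := h2
  obtain ⟨p, hp1, hp2⟩ := aux_proj w1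
  obtain ⟨q, hq1, hq2⟩ := aux_proj w2
  by_contra hne
  have hsp : walkSign σ p ≠ walkSign σ q := by
    intro hEq
    apply hne
    simp only at hp2 hq2
    rw [hp2, hq2, hEq]
  have hneg : walkSign σ (p.append q.reverse) = -1 := by
    rw [walkSign_append, walkSign_reverse, units_ne_iff hsp]
    simp [Int.units_mul_self]
  have hsupp : ∀ x ∈ (p.append q.reverse).support, x ∈ {x | f x = f a.1} := by
    intro x hx
    rw [Walk.mem_support_append_iff] at hx
    rcases hx with hx | hx
    · exact hp1 x hx
    · rw [Walk.support_reverse, List.mem_reverse] at hx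
      exact hq1 x hx
  obtain ⟨v', c, hc, hcsup, hcsign⟩ :=
    exists_negCycle (p.append q.reverse).length _ le_rfl hsupp hneg
  have := hb c hc hcsup
  rw [this] at hcsign
  exact absurd hcsign (by decide)

variable (G σ f)

lemma pot_exists (u : V) :
    ∃ t, (auxGraph G σ f).Reachable ((Quot.out ((classGraph G f).connectedComponentMk u), 1))
      (u, t) := by
  have hreach : (classGraph G f).Reachable (Quot.out ((classGraph G f).connectedComponentMk u)) u := by
    have := Quot.out_eq ((classGraph G f).connectedComponentMk u)
    exact (SimpleGraph.ConnectedComponent.eq.mp this)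
  obtain ⟨w⟩ := hreach
  exact aux_lift w 1

noncomputable def pot (u : V) : ℤˣ := (pot_exists G σ f u).choose

lemma pot_spec (u : V) :
    (auxGraph G σ f).Reachable ((Quot.out ((classGraph G f).connectedComponentMk u), 1))
      (u, pot G σ f u) := (pot_exists G σ f u).choose_spec

variable {G σ f}

lemma pot_proper (hbal : ∀ X : Set V, (∃ i, X = {v | f v = i}) → IsBalancedSet G σ X)
    {u v : V} (huv : G.Adj u v) (hneg : σ s(u, v) = -1) (hf : f u = f v) :
    pot G σ f u ≠ pot G σ f v := by
  have hcomp : (classGraph G f).connectedComponentMk u = (classGraph G f).connectedComponentMk v :=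
    SimpleGraph.ConnectedComponent.eq.mpr (Adj.reachable ⟨huv, hf⟩)
  set R := Quot.out ((classGraph G f).connectedComponentMk u) with hR
  have h1 := pot_spec G σ f u
  have h2 : (auxGraph G σ f).Reachable (R, 1) (v, pot G σ f v) := by
    rw [hR, hcomp]; exact pot_spec G σ f v
  have h3 : (auxGraph G σ f).Reachable (R, 1) (v, pot G σ f u * σ s(u, v)) :=
    h1.trans (Adj.reachable ⟨huv, hf, rfl⟩)
  have hb : IsBalancedSet G σ {x | f x = f R} := hbal _ ⟨f R, rfl⟩
  have := aux_unique hb h3 h2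
  intro hEq
  rw [hneg, ← hEq] at this
  rcases Int.units_eq_one_or (pot G σ f u) with h | h <;> rw [h] at this <;>
    exact absurd this (by decide)

end Potential
abbrev Vtx (N : ℕ) : Type :=
  {t : Fin N × Fin N × Fin N // (t.1 : ℕ) < (t.2.1 : ℕ) ∧ (t.2.1 : ℕ) < (t.2.2 : ℕ)}

def Gr (N : ℕ) : SimpleGraph (Vtx N) where
  Adj u v := u ≠ v ∧
    (((u.1.1 : ℕ) = (v.1.1 : ℕ) ∧ (u.1.2.1 : ℕ) = (v.1.2.1 : ℕ)) ∨
     ((u.1.2.1 : ℕ) = (v.1.2.1 : ℕ) ∧ (u.1.2.2 : ℕ) = (v.1.2.2 : ℕ)) ∨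
     ((u.1.2.1 : ℕ) = (v.1.1 : ℕ) ∧ (u.1.2.2 : ℕ) = (v.1.2.1 : ℕ)) ∨
     ((v.1.2.1 : ℕ) = (u.1.1 : ℕ) ∧ (v.1.2.2 : ℕ) = (u.1.2.1 : ℕ)))
  symm := by
    constructor
    rintro u v ⟨hne, hc⟩
    exact ⟨hne.symm, by omega⟩
  loopless := by constructor; rintro u ⟨hne, -⟩; exact hne rfl

def sg (N : ℕ) : Sym2 (Vtx N) → ℤˣ :=
  Sym2.lift ⟨fun u v =>
    if ((u.1.1 : ℕ) = (v.1.1 : ℕ) ∧ (u.1.2.1 : ℕ) = (v.1.2.1 : ℕ)) ∨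
       ((u.1.2.1 : ℕ) = (v.1.2.1 : ℕ) ∧ (u.1.2.2 : ℕ) = (v.1.2.2 : ℕ)) then 1 else -1,
   by
    intro u v
    have h : (((u.1.1 : ℕ) = (v.1.1 : ℕ) ∧ (u.1.2.1 : ℕ) = (v.1.2.1 : ℕ)) ∨
       ((u.1.2.1 : ℕ) = (v.1.2.1 : ℕ) ∧ (u.1.2.2 : ℕ) = (v.1.2.2 : ℕ))) ↔
       (((v.1.1 : ℕ) = (u.1.1 : ℕ) ∧ (v.1.2.1 : ℕ) = (u.1.2.1 : ℕ)) ∨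
       ((v.1.2.1 : ℕ) = (u.1.2.1 : ℕ) ∧ (v.1.2.2 : ℕ) = (u.1.2.2 : ℕ))) := by
      constructor <;> intro h <;> omega
    simp only [h]⟩

lemma sg_eval {N : ℕ} (u v : Vtx N) :
    sg N s(u, v) =
      if ((u.1.1 : ℕ) = (v.1.1 : ℕ) ∧ (u.1.2.1 : ℕ) = (v.1.2.1 : ℕ)) ∨
         ((u.1.2.1 : ℕ) = (v.1.2.1 : ℕ) ∧ (u.1.2.2 : ℕ) = (v.1.2.2 : ℕ)) then 1 else -1 := rfl

lemma trianglesPos (N : ℕ) : ∀ u v w : Vtx N, (Gr N).Adj u v → (Gr N).Adj v w → (Gr N).Adj u w →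
    sg N s(u, v) * sg N s(v, w) * sg N s(u, w) = 1 := by
  intro u v w huv hvw huw
  have h1 := huv.2
  have h2 := hvw.2
  have h3 := huw.2
  clear huv hvw huw
  rw [sg_eval, sg_eval, sg_eval]
  obtain ⟨⟨u1, u2, u3⟩, hu1, hu2⟩ := u
  obtain ⟨⟨v1, v2, v3⟩, hv1, hv2⟩ := v
  obtain ⟨⟨w1, w2, w3⟩, hw1, hw2⟩ := w
  simp only at h1 h2 h3 hu1 hu2 hv1 hv2 hw1 hw2 ⊢
  rcases h1 with ⟨e1, e2⟩ | ⟨e1, e2⟩ | ⟨e1, e2⟩ | ⟨e1, e2⟩ <;>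
    rcases h2 with ⟨e3, e4⟩ | ⟨e3, e4⟩ | ⟨e3, e4⟩ | ⟨e3, e4⟩ <;>
      rcases h3 with ⟨e5, e6⟩ | ⟨e5, e6⟩ | ⟨e5, e6⟩ | ⟨e5, e6⟩ <;>
        split_ifs <;> first | (exfalso; omega) | rfl | decide

def Cont {N : ℕ} (x : Vtx N) (p q : ℕ) : Prop :=
  ((x.1.1 : ℕ) = p ∧ (x.1.2.1 : ℕ) = q) ∨ ((x.1.2.1 : ℕ) = p ∧ (x.1.2.2 : ℕ) = q)

lemma share_adj {N : ℕ} {x y : Vtx N} (hne : x ≠ y) {p q : ℕ}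
    (hx : Cont x p q) (hy : Cont y p q) : (Gr N).Adj x y := by
  refine ⟨hne, ?_⟩
  simp only [Cont] at hx hy
  omega

lemma clawFree (N : ℕ) : ¬ HasInducedCopy (starGraph 3) (Gr N) := by
  rintro ⟨f, hf⟩
  have h01 : (Gr N).Adj (f 0) (f 1) := (hf 0 1).mpr ⟨Or.inl rfl, by decide⟩
  have h02 : (Gr N).Adj (f 0) (f 2) := (hf 0 2).mpr ⟨Or.inl rfl, by decide⟩
  have h03 : (Gr N).Adj (f 0) (f 3) := (hf 0 3).mpr ⟨Or.inl rfl, by decide⟩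
  have n12 : ¬ (Gr N).Adj (f 1) (f 2) := fun h => by
    have := (hf 1 2).mp h
    simp only [starGraph] at this
    exact absurd this (by decide)
  have n13 : ¬ (Gr N).Adj (f 1) (f 3) := fun h => by
    have := (hf 1 3).mp h
    simp only [starGraph] at this
    exact absurd this (by decide)
  have n23 : ¬ (Gr N).Adj (f 2) (f 3) := fun h => by
    have := (hf 2 3).mp h
    simp only [starGraph] at this
    exact absurd this (by decide)
  have d1 : Cont (f 1) ((f 0).1.1 : ℕ) ((f 0).1.2.1 : ℕ) ∨
      Cont (f 1) ((f 0).1.2.1 : ℕ) ((f 0).1.2.2 : ℕ) := by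
    have := h01.2
    simp only [Cont]
    omega
  have d2 : Cont (f 2) ((f 0).1.1 : ℕ) ((f 0).1.2.1 : ℕ) ∨
      Cont (f 2) ((f 0).1.2.1 : ℕ) ((f 0).1.2.2 : ℕ) := by
    have := h02.2
    simp only [Cont]
    omega
  have d3 : Cont (f 3) ((f 0).1.1 : ℕ) ((f 0).1.2.1 : ℕ) ∨
      Cont (f 3) ((f 0).1.2.1 : ℕ) ((f 0).1.2.2 : ℕ) := by
    have := h03.2
    simp only [Cont]
    omega
  have ne12 : f 1 ≠ f 2 := f.injective.ne (by decide)
  have ne13 : f 1 ≠ f 3 := f.injective.ne (by decide)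
  have ne23 : f 2 ≠ f 3 := f.injective.ne (by decide)
  rcases d1 with d1 | d1 <;> rcases d2 with d2 | d2 <;> rcases d3 with d3 | d3
  · exact n12 (share_adj ne12 d1 d2)
  · exact n12 (share_adj ne12 d1 d2)
  · exact n13 (share_adj ne13 d1 d3)
  · exact n23 (share_adj ne23 d2 d3)
  · exact n23 (share_adj ne23 d2 d3)
  · exact n13 (share_adj ne13 d1 d3)
  · exact n12 (share_adj ne12 d1 d2)
  · exact n12 (share_adj ne12 d1 d2)

section Counting

variable {N c : ℕ}

/-- Make a vertex from coordinates. -/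
def mkV {N : ℕ} (a b x : Fin N) (h1 : (a : ℕ) < (b : ℕ)) (h2 : (b : ℕ) < (x : ℕ)) : Vtx N :=
  ⟨(a, b, x), h1, h2⟩

def gset (F : Vtx N → Fin c × Bool) (junk : Fin c × Bool) (a b : Fin N) :
    Finset (Fin c × Bool) :=
  (Finset.univ.filter fun x : Fin N => (b : ℕ) < (x : ℕ)).image
    (fun x : Fin N => if h : (a : ℕ) < (b : ℕ) ∧ (b : ℕ) < (x : ℕ) then F (mkV a b x h.1 h.2) else junk)

def Gset (F : Vtx N → Fin c × Bool) (junk : Fin c × Bool) (a : Fin N) :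
    Finset (Finset (Fin c × Bool)) :=
  (Finset.univ.filter fun b : Fin N => (a : ℕ) < (b : ℕ)).image (gset F junk a)

lemma mem_gset {F : Vtx N → Fin c × Bool} {junk : Fin c × Bool} {a b x : Fin N}
    (h1 : (a : ℕ) < (b : ℕ)) (h2 : (b : ℕ) < (x : ℕ)) :
    F (mkV a b x h1 h2) ∈ gset F junk a b := by
  rw [gset, Finset.mem_image]
  refine ⟨x, by simp only [Finset.mem_filter, Finset.mem_univ, true_and]; exact h2, ?_⟩
  rw [dif_pos ⟨h1, h2⟩]

lemma gset_proper {F : Vtx N → Fin c × Bool} {junk : Fin c × Bool}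
    (hF : ∀ u v : Vtx N, (u.1.2.1 : ℕ) = (v.1.1 : ℕ) → (u.1.2.2 : ℕ) = (v.1.2.1 : ℕ) →
      F u ≠ F v)
    {a b z : Fin N} (h1 : (a : ℕ) < (b : ℕ)) (h2 : (b : ℕ) < (z : ℕ)) :
    gset F junk a b ≠ gset F junk b z := by
  intro heq
  have hm : F (mkV a b z h1 h2) ∈ gset F junk b z := heq ▸ mem_gset h1 h2
  rw [gset, Finset.mem_image] at hm
  obtain ⟨x, hx, hdx⟩ := hm
  rw [Finset.mem_filter] at hx
  have hzx : (z : ℕ) < (x : ℕ) := hx.2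
  rw [dif_pos ⟨h2, hzx⟩] at hdx
  exact hF (mkV a b z h1 h2) (mkV b z x h2 hzx) rfl rfl hdx.symm


lemma Gset_injective {F : Vtx N → Fin c × Bool} {junk : Fin c × Bool}
    (hF : ∀ u v : Vtx N, (u.1.2.1 : ℕ) = (v.1.1 : ℕ) → (u.1.2.2 : ℕ) = (v.1.2.1 : ℕ) →
      F u ≠ F v) :
    Function.Injective (Gset F junk) := by
  have key : ∀ a b : Fin N, (a : ℕ) < (b : ℕ) → Gset F junk a ≠ Gset F junk b := by
    intro a b hab heq
    have hm : gset F junk a b ∈ Gset F junk a := by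
      rw [Gset, Finset.mem_image]
      exact ⟨b, by simp only [Finset.mem_filter, Finset.mem_univ, true_and]; exact hab, rfl⟩
    rw [heq, Gset, Finset.mem_image] at hm
    obtain ⟨z, hz, hgz⟩ := hm
    rw [Finset.mem_filter] at hz
    exact gset_proper hF hab hz.2 hgz.symm
  intro a b hab
  by_contra hne
  have : (a : ℕ) ≠ (b : ℕ) := fun h => hne (Fin.ext h)
  rcases this.lt_or_gt with h | h
  · exact key a b h hab
  · exact key b a h hab.symm

lemma counting (hc : 0 < c) (hN : 2 ^ 2 ^ (2 * c) < N) (F : Vtx N → Fin c × Bool)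
    (hF : ∀ u v : Vtx N, (u.1.2.1 : ℕ) = (v.1.1 : ℕ) → (u.1.2.2 : ℕ) = (v.1.2.1 : ℕ) →
      F u ≠ F v) : False := by
  have hinj := Gset_injective (junk := (⟨0, hc⟩, true)) hF
  have hcard := Fintype.card_le_of_injective _ hinj
  rw [Fintype.card_fin] at hcard
  have h1 : Fintype.card (Finset (Finset (Fin c × Bool))) = 2 ^ 2 ^ (2 * c) := by
    rw [Fintype.card_finset, Fintype.card_finset, Fintype.card_prod, Fintype.card_fin,
      Fintype.card_bool, two_mul]
    ring_nf
  omega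

end Counting

section Glue
variable {G : SimpleGraph V} {σ : Sym2 V → ℤˣ}

lemma balanced_anti {X Y : Set V} (h : X ⊆ Y) (hY : IsBalancedSet G σ Y) :
    IsBalancedSet G σ X :=
  fun _ w hc hs => hY w hc (fun u hu => h (hs u hu))

lemma colorable_mono {n m : ℕ} (h : n ≤ m) :
    BalancedColorable G σ n → BalancedColorable G σ m := by
  rintro ⟨f, hf⟩
  refine ⟨fun v => Fin.castLE h (f v), ?_⟩
  intro i
  by_cases hi : (i : ℕ) < n
  · refine balanced_anti ?_ (hf ⟨i, hi⟩)
    intro v hv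
    have hv' : ((f v : ℕ)) = (i : ℕ) := congrArg Fin.val hv
    show f v = ⟨i, hi⟩
    exact Fin.ext hv'
  · intro v w _ hs
    exfalso
    have h1 : Fin.castLE h (f v) = i := hs v w.start_mem_support
    have h2 : ((f v : ℕ)) = (i : ℕ) := congrArg Fin.val h1
    have := (f v).isLt
    omega

lemma colorable_card [Fintype V] (G : SimpleGraph V) (σ : Sym2 V → ℤˣ) :
    BalancedColorable G σ (Fintype.card V) := by
  refine ⟨Fintype.equivFin V, ?_⟩
  intro i v w hcyc hsup
  exfalso
  cases w with
  | nil => exact hcyc.ne_nil rfl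
  | @cons _ u _ h p =>
    have h1 : Fintype.equivFin V v = i := hsup v ((Walk.cons h p).start_mem_support)
    have h2 : Fintype.equivFin V u = i := hsup u (by
      rw [Walk.support_cons]
      exact List.mem_cons_of_mem _ p.start_mem_support)
    have hvu : v = u := (Fintype.equivFin V).injective (h1.trans h2.symm)
    subst hvu
    exact G.irrefl h

end Glue

lemma main_refute {c : ℕ} (hc : 0 < c) :
    ¬ BalancedColorable (Gr (2 ^ 2 ^ (2 * c) + 1)) (sg (2 ^ 2 ^ (2 * c) + 1)) c := by
  classical
  set N := 2 ^ 2 ^ (2 * c) + 1 with hN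
  rintro ⟨f, hf⟩
  have hbal : ∀ X : Set (Vtx N), (∃ i, X = {v | f v = i}) →
      IsBalancedSet (Gr N) (sg N) X := by
    rintro X ⟨i, rfl⟩
    exact hf i
  set F : Vtx N → Fin c × Bool :=
    fun u => (f u, decide (pot (Gr N) (sg N) f u = 1)) with hF
  have hFprop : ∀ u v : Vtx N, (u.1.2.1 : ℕ) = (v.1.1 : ℕ) →
      (u.1.2.2 : ℕ) = (v.1.2.1 : ℕ) → F u ≠ F v := by
    intro u v h1 h2 hEq
    have hu := u.2
    have hv := v.2
    have hne : u ≠ v := by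
      rintro rfl
      omega
    have hadj : (Gr N).Adj u v := ⟨hne, Or.inr (Or.inr (Or.inl ⟨h1, h2⟩))⟩
    have hneg : sg N s(u, v) = -1 := by
      rw [sg_eval, if_neg]
      omega
    have hfe : f u = f v := congrArg Prod.fst hEq
    have hde : decide (pot (Gr N) (sg N) f u = 1) = decide (pot (Gr N) (sg N) f v = 1) :=
      congrArg Prod.snd hEq
    have hiff : (pot (Gr N) (sg N) f u = 1) ↔ (pot (Gr N) (sg N) f v = 1) :=
      decide_eq_decide.mp hde
    have hpot : pot (Gr N) (sg N) f u = pot (Gr N) (sg N) f v := by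
      rcases Int.units_eq_one_or (pot (Gr N) (sg N) f u) with h | h <;>
        rcases Int.units_eq_one_or (pot (Gr N) (sg N) f v) with h' | h' <;>
          simp_all
    exact pot_proper hbal hadj hneg hfe hpot
  exact counting hc (by omega) F hFprop


/-- {(K_3,−), K_{1,3}} is not a GS set. -/
theorem stmt8 (c : ℕ) (hc : 0 < c) :
    ∃ (V : Type) (_ : Fintype V) (G : SimpleGraph V) (σ : Sym2 V → ℤˣ),
      AllTrianglesPositive G σ ∧ ¬ HasInducedCopy (starGraph 3) G ∧
        c < balancedChromNum G σ := by
  refine ⟨Vtx (2 ^ 2 ^ (2 * c) + 1), inferInstance, Gr _, sg _, ?_, clawFree _, ?_⟩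
  · intro u v w h1 h2 h3
    exact trianglesPos _ u v w h1 h2 h3
  · by_contra hle
    push_neg at hle
    have hnonempty : BalancedColorable (Gr (2 ^ 2 ^ (2 * c) + 1)) (sg _)
        (Fintype.card (Vtx (2 ^ 2 ^ (2 * c) + 1))) := colorable_card _ _
    have hmem := Nat.sInf_mem (⟨_, hnonempty⟩ :
      Set.Nonempty {n | BalancedColorable (Gr (2 ^ 2 ^ (2 * c) + 1)) (sg _) n})
    exact main_refute hc (colorable_mono hle hmem)


end SignedGS
end

section
/- A signed graph (G, σ) has every triangle positive (equivalently, no induced subgraph switching equivalent to the all-negative triangle (K_3, −)) if and only if for every vertex v of G, the closed neighborhood N[v] = {v} ∪ N(v) is a balanced set of (G, σ). -/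
open SimpleGraph

namespace SignedGS

variable {V : Type*}

private lemma u_mul_cancel (a b c : ℤˣ) : a * b * (b * c) = a * c := by
  rcases Int.units_eq_one_or a with rfl | rfl <;>
  rcases Int.units_eq_one_or b with rfl | rfl <;>
  rcases Int.units_eq_one_or c with rfl | rfl <;> decide

private lemma u_mid (x y z : ℤˣ) (h : x * y * z = 1) : y = x * z := by
  rcases Int.units_eq_one_or x with rfl | rfl <;>
  rcases Int.units_eq_one_or y with rfl | rfl <;>
  rcases Int.units_eq_one_or z with rfl | rfl <;> revert h <;> decide

private lemma walkSign_eta {G : SimpleGraph V} (σ : Sym2 V → ℤˣ) (η : V → ℤˣ)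
    {u v : V} (w : G.Walk u v)
    (h : ∀ a b : V, G.Adj a b → a ∈ w.support → b ∈ w.support →
      σ s(a, b) = η a * η b) :
    walkSign σ w = η u * η v := by
  induction w with
  | nil => simp [walkSign, Int.units_mul_self]
  | @cons a b c hab p ih =>
    have hmem : ∀ x, x ∈ p.support → x ∈ (Walk.cons hab p).support := by
      intro x hx
      simp [Walk.support_cons, hx]
    have htail : walkSign σ p = η b * η c :=
      ih (fun x y hxy hx hy => h x y hxy (hmem x hx) (hmem y hy))
    have hedge : σ s(a, b) = η a * η b :=
      h a b hab (by simp [Walk.support_cons]) (hmem b p.start_mem_support)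
    have hthis : walkSign σ (Walk.cons hab p) = σ s(a, b) * walkSign σ p := by
      simp [walkSign, Walk.edges_cons]
    rw [hthis, hedge, htail, u_mul_cancel]

/-- every triangle positive iff every closed neighborhood is balanced. -/
theorem stmt10 {V : Type*} [Fintype V] (G : SimpleGraph V) (σ : Sym2 V → ℤˣ) :
    AllTrianglesPositive G σ ↔
      ∀ v : V, IsBalancedSet G σ (insert v (G.neighborSet v)) := by
  classical
  constructor
  · intro htri v c w hcyc hsupp
    set η : V → ℤˣ := fun u => if u = v then 1 else σ s(v, u) with hη
    have key : ∀ a b : V, G.Adj a b → a ∈ w.support → b ∈ w.support →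
        σ s(a, b) = η a * η b := by
      intro a b hab ha hb
      have ha' := hsupp a ha
      have hb' := hsupp b hb
      simp only [Set.mem_insert_iff, mem_neighborSet] at ha' hb'
      by_cases hav : a = v
      · subst hav
        have hbv : b ≠ a := fun h => G.irrefl (v := a) (h ▸ hab)
        simp [hη, hbv]
      · by_cases hbv : b = v
        · subst hbv
          simp only [hη, if_pos rfl, if_neg hav, mul_one]
          rw [Sym2.eq_swap]
        · have hva : G.Adj v a := ha'.resolve_left hav
          have hvb : G.Adj v b := hb'.resolve_left hbv
          simp only [hη, if_neg hav, if_neg hbv]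
          exact u_mid _ _ _ (htri v a b hva hab hvb)
    rw [walkSign_eta σ η w key]
    exact Int.units_mul_self _
  · intro hbal u v w huv hvw huw
    have hne_uv : u ≠ v := huv.ne
    have hne_vw : v ≠ w := hvw.ne
    have hne_uw : u ≠ w := huw.ne
    let W : G.Walk u u := Walk.cons huv (Walk.cons hvw (Walk.cons huw.symm Walk.nil))
    have hcyc : W.IsCycle := by
      rw [Walk.isCycle_def]
      refine ⟨?_, by simp [W], ?_⟩
      · rw [Walk.isTrail_def]
        simp [W, Sym2.eq_iff, hne_uv, hne_vw, hne_uw,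
          Ne.symm hne_uv, Ne.symm hne_vw, Ne.symm hne_uw]
      · simp only [W, Walk.support_cons, Walk.support_nil, List.tail_cons, List.nodup_cons,
          List.mem_cons, List.mem_singleton, List.not_mem_nil]
        simp [hne_vw, Ne.symm hne_uw, Ne.symm hne_uv]
    have hsupp : ∀ x ∈ W.support, x ∈ (insert u (G.neighborSet u) : Set V) := by
      intro x hx
      simp only [W, Walk.support_cons, Walk.support_nil, List.mem_cons,
        List.not_mem_nil, or_false] at hx
      rcases hx with rfl | rfl | rfl | rfl
      · exact Set.mem_insert _ _
      · exact Set.mem_insert_of_mem _ huv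
      · exact Set.mem_insert_of_mem _ huw
      · exact Set.mem_insert _ _
    have hone := hbal u W hcyc hsupp
    have hW : walkSign σ W = σ s(u, v) * (σ s(v, w) * (σ s(w, u) * 1)) := by
      simp [W, walkSign, Walk.edges_cons]
    rw [hW] at hone
    rw [Sym2.eq_swap (a := w) (b := u), mul_one, ← mul_assoc] at hone
    exact hone

end SignedGS
end

section
/- Let (G, σ) be a signed graph whose underlying graph is the full join G_1 ⋈ G_2 of two vertex-disjoint graphs G_1 and G_2, and suppose that (G, σ) contains no triangle whose three edges are all negative and no four vertices inducing a copy of (K_4, M), the complete graph on 4 vertices whose negative edges form a perfect matching (exactly two disjoint negative edges, the other four edges positive). If the signed subgraph induced on V(G_1) contains a negative edge, then the graph formed by the negative edges of (G, σ) inside V(G_2) has chromatic number at most 3. -/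
open SimpleGraph

namespace SignedGS

variable {V : Type*}

/-- in a full join with no all-negative triangle and no (K_4,M),
a negative edge on one side forces the negative edges on the other side to induce a
3-colorable graph. -/
theorem stmt14 {W1 W2 : Type*} [Fintype W1] [Fintype W2]
    (G1 : SimpleGraph W1) (G2 : SimpleGraph W2) (σ : Sym2 (W1 ⊕ W2) → ℤˣ)
    (h1 : ¬ HasNegTriangle (fullJoin G1 G2) σ)
    (h2 : ¬ HasK4M (fullJoin G1 G2) σ)
    (h3 : ∃ x y : W1, G1.Adj x y ∧ σ s(Sum.inl x, Sum.inl y) = -1) :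
    (negSubgraph G2 (fun e => σ (Sym2.map Sum.inr e))).chromaticNumber ≤ 3 := by
  classical
  obtain ⟨x, y, hxy, hσxy⟩ := h3
  have hunits : ∀ a : ℤˣ, ¬ a = -1 → a = 1 := fun a h =>
    (Int.units_eq_one_or a).resolve_right h
  have hcol : (negSubgraph G2 (fun e => σ (Sym2.map Sum.inr e))).Colorable 3 := by
    refine ⟨SimpleGraph.Coloring.mk
      (fun w => if σ s(Sum.inl x, Sum.inr w) = -1 then (0 : Fin 3)
        else if σ s(Sum.inl y, Sum.inr w) = -1 then 1 else 2) ?_⟩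
    intro w w' hadj heq
    obtain ⟨hadj2, hneg⟩ := hadj
    simp only [Sym2.map_pair_eq] at hneg
    by_cases hxw : σ s(Sum.inl x, Sum.inr w) = -1 <;>
      by_cases hxw' : σ s(Sum.inl x, Sum.inr w') = -1 <;>
      by_cases hyw : σ s(Sum.inl y, Sum.inr w) = -1 <;>
      by_cases hyw' : σ s(Sum.inl y, Sum.inr w') = -1 <;>
      simp only [hxw, hxw', hyw, hyw', if_true, if_false, if_pos, if_neg,
        not_false_iff] at heq <;>
      first
        | exact absurd heq (by decide)
        | exact h1 ⟨Sum.inl x, Sum.inr w, Sum.inr w', trivial, hadj2, trivial,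
            hxw, hneg, hxw'⟩
        | exact h1 ⟨Sum.inl y, Sum.inr w, Sum.inr w', trivial, hadj2, trivial,
            hyw, hneg, hyw'⟩
        | exact h2 ⟨Sum.inl x, Sum.inl y, Sum.inr w, Sum.inr w',
            fun h => hxy.ne (Sum.inl.inj h), Sum.inl_ne_inr, Sum.inl_ne_inr,
            Sum.inl_ne_inr, Sum.inl_ne_inr, fun h => hadj2.ne (Sum.inr.inj h),
            hxy, trivial, trivial, trivial, trivial, hadj2,
            hσxy, hneg, hunits _ hxw, hunits _ hxw', hunits _ hyw, hunits _ hyw'⟩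
  have := hcol.chromaticNumber_le
  exact_mod_cast this

end SignedGS
end
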